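/- Let ι be a finite type, θ : ι → ℝ with θ i < 0 for every i, and v : ι → ℕ. For every family of real numbers σ : (i : ι) → Fin (v i) → ℝ one has Σ_i Σ_j θ i * σ i j ≤ Real.sqrt (Σ_i (v i : ℝ) * |θ i|) * Real.sqrt (Σ_i Σ_j |θ i| * (σ i j)^2). Moreover, if σ is not identically zero, then equality holds if and only if there exists c > 0 such that σ i j = −c for all i and all j : Fin (v i). -/

import Mathlib

open RealInnerProductSpace

/-- Cauchy–Schwarz bound for the Kempf–Ness numerical invariant: for negative `θ` and
any `σ`, `∑ᵢ∑ⱼ θ i * σ i j ≤ √(∑ᵢ v i * |θ i|) * √(∑ᵢ∑ⱼ |θ i| * (σ i j)²)`, and for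
nonzero `σ`, equality holds iff all entries `σ i j` equal a common negative number `-c`. -/
theorem kempfNess_cauchySchwarz {ι : Type*} [Fintype ι]
    (θ : ι → ℝ) (hθ : ∀ i, θ i < 0) (v : ι → ℕ) :
    (∀ σ : (i : ι) → Fin (v i) → ℝ,
        (∑ i, ∑ j, θ i * σ i j) ≤
          Real.sqrt (∑ i, (v i : ℝ) * |θ i|) *
            Real.sqrt (∑ i, ∑ j, |θ i| * σ i j ^ 2)) ∧
      ∀ σ : (i : ι) → Fin (v i) → ℝ, σ ≠ 0 →
        ((∑ i, ∑ j, θ i * σ i j) =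
            Real.sqrt (∑ i, (v i : ℝ) * |θ i|) *
              Real.sqrt (∑ i, ∑ j, |θ i| * σ i j ^ 2) ↔
          ∃ c : ℝ, 0 < c ∧ ∀ (i : ι) (j : Fin (v i)), σ i j = -c) := by
  classical
  have habs : ∀ i, (0:ℝ) < |θ i| := fun i => abs_pos.2 (hθ i).ne
  have hrt : ∀ i, (0:ℝ) < Real.sqrt |θ i| := fun i => Real.sqrt_pos.2 (habs i)
  have hθeq : ∀ i, θ i = -|θ i| := fun i => by rw [abs_of_neg (hθ i)]; ring
  set A : EuclideanSpace ℝ (Σ i, Fin (v i)) :=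
    WithLp.toLp 2 (fun p : (Σ i, Fin (v i)) => Real.sqrt |θ p.1|) with hA
  set B : ((i : ι) → Fin (v i) → ℝ) → EuclideanSpace ℝ (Σ i, Fin (v i)) :=
    fun σ => WithLp.toLp 2 (fun p : (Σ i, Fin (v i)) => Real.sqrt |θ p.1| * σ p.1 p.2) with hB
  have hAnorm : ‖A‖ = Real.sqrt (∑ i, (v i : ℝ) * |θ i|) := by
    rw [EuclideanSpace.norm_eq]
    congr 1
    rw [← Finset.univ_sigma_univ, Finset.sum_sigma]
    refine Finset.sum_congr rfl fun i _ => ?_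
    simp [hA, Real.norm_eq_abs, sq_abs, Real.sq_sqrt (abs_nonneg (θ i)),
      Finset.sum_const, Finset.card_univ, mul_comm]
  have hBnorm : ∀ σ, ‖B σ‖ = Real.sqrt (∑ i, ∑ j, |θ i| * σ i j ^ 2) := by
    intro σ
    rw [EuclideanSpace.norm_eq]
    congr 1
    rw [← Finset.univ_sigma_univ, Finset.sum_sigma]
    refine Finset.sum_congr rfl fun i _ => Finset.sum_congr rfl fun j _ => ?_
    simp [hB, Real.norm_eq_abs, sq_abs, mul_pow, Real.sq_sqrt (abs_nonneg (θ i))]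
  have hinner : ∀ σ, (inner ℝ A (B σ) : ℝ) = ∑ i, ∑ j, |θ i| * σ i j := by
    intro σ
    rw [PiLp.inner_apply]
    rw [← Finset.univ_sigma_univ, Finset.sum_sigma]
    refine Finset.sum_congr rfl fun i _ => Finset.sum_congr rfl fun j _ => ?_
    simp only [hA, hB, RCLike.inner_apply, conj_trivial]
    rw [mul_comm, ← mul_assoc, Real.mul_self_sqrt (abs_nonneg (θ i))]
  have hL : ∀ σ, (∑ i, ∑ j, θ i * σ i j) = (inner ℝ (-A) (B σ) : ℝ) := by
    intro σ
    rw [inner_neg_left, hinner, ← Finset.sum_neg_distrib]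
    refine Finset.sum_congr rfl fun i _ => ?_
    rw [← Finset.sum_neg_distrib]
    refine Finset.sum_congr rfl fun j _ => ?_
    rw [abs_of_neg (hθ i)]; ring
  constructor
  · intro σ
    rw [hL σ, ← hAnorm, ← hBnorm σ, ← norm_neg A]
    exact real_inner_le_norm _ _
  · intro σ hσ
    obtain ⟨i0, hi0⟩ := Function.ne_iff.1 hσ
    obtain ⟨j0, hj0⟩ := Function.ne_iff.1 hi0
    have hj0 : σ i0 j0 ≠ 0 := hj0
    have hBne : B σ ≠ 0 := by
      intro h
      have := congrArg (fun x => x ⟨i0, j0⟩) h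
      simp only [hB] at this
      exact hj0 (by
        have := mul_eq_zero.1 this
        rcases this with h' | h'
        · exact absurd h' (hrt i0).ne'
        · exact h')
    have hAne : A ≠ 0 := by
      intro h
      have := congrArg (fun x => x ⟨i0, j0⟩) h
      exact (hrt i0).ne' this
    have hApos : (0:ℝ) < ‖A‖ := norm_pos_iff.2 hAne
    have hBpos : (0:ℝ) < ‖B σ‖ := norm_pos_iff.2 hBne
    rw [hL σ, ← hAnorm, ← hBnorm σ, ← norm_neg A, inner_eq_norm_mul_iff_real]
    constructor
    · intro h
      refine ⟨‖B σ‖ / ‖A‖, div_pos hBpos hApos, fun i j => ?_⟩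
      have := congrArg (fun x => x ⟨i, j⟩) h
      simp only [PiLp.smul_apply, PiLp.neg_apply, norm_neg, smul_eq_mul, hA, hB, PiLp.toLp_apply] at this
      -- ‖B σ‖ * -(√|θ i|) = ‖A‖ * (√|θ i| * σ i j)
      have hr := (hrt i).ne'
      field_simp
      nlinarith [this, hrt i, hApos]
    · rintro ⟨c, hc, hcσ⟩
      ext p
      simp only [PiLp.smul_apply, PiLp.neg_apply, norm_neg, smul_eq_mul, hA, hB, PiLp.toLp_apply, hcσ p.1 p.2]
      have hnB : ‖B σ‖ = c * ‖A‖ := by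
        have : B σ = (-c) • A := by
          ext q
          simp [hB, hA, hcσ q.1 q.2]; ring
        rw [this, norm_smul]
        simp [abs_of_pos hc]
      rw [hnB]; ring
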